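/- arXiv:2404.17789 — 2 statements merged into one kernel-verified Lean document; each statement's English description precedes it below -/
import Mathlib

section
/- With u as in the previous statement (the solution of u'' = μu on (0,z)∪(z,1), u(0)=u(1)=0, jump u'(z⁺)−u'(z⁻) = −λ with λ > 0), u is strictly positive on (0,1) and ∫₀¹ u(x) dx = (λ/μ)·(1 − (sinh(√μ z) + sinh(√μ(1−z)))/sinh(√μ)). -/
open Real Set Topology Filter

lemma const_of_hasDerivAt_zero {f : ℝ → ℝ} {a b : ℝ}
    (h : ∀ x ∈ Ioo a b, HasDerivAt f 0 x) :
    ∀ x ∈ Ioo a b, ∀ y ∈ Ioo a b, f x = f y := by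
  have key : ∀ x ∈ Ioo a b, ∀ y ∈ Ioo a b, x ≤ y → f y = f x := by
    intro x hx y hy hxy
    have hsub : Icc x y ⊆ Ioo a b := fun t ht => ⟨lt_of_lt_of_le hx.1 ht.1, lt_of_le_of_lt ht.2 hy.2⟩
    exact constant_of_has_deriv_right_zero
      (fun t ht => (h t (hsub ht)).continuousAt.continuousWithinAt)
      (fun t ht => (h t (hsub (Ico_subset_Icc_self ht))).hasDerivWithinAt) y ⟨hxy, le_rfl⟩
  intro x hx y hy
  rcases le_total x y with hxy | hxy
  · exact (key x hx y hy hxy).symm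
  · exact key y hy x hx hxy

lemma ode_rep {s a b : ℝ} (hs : 0 < s) (hab : a < b) {f : ℝ → ℝ}
    (hf : ContDiffOn ℝ 2 f (Icc a b))
    (hode : ∀ x ∈ Ioo a b, deriv (deriv f) x = s^2 * f x) :
    ∀ x ∈ Icc a b, f x =
      (f a * Real.sinh (s*(b-x)) + f b * Real.sinh (s*(x-a))) / Real.sinh (s*(b-a)) := by
  have hfo : ContDiffOn ℝ 2 f (Ioo a b) := hf.mono Ioo_subset_Icc_self
  have hdf : ∀ x ∈ Ioo a b, DifferentiableAt ℝ f x := fun x hx =>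
    (hfo.differentiableOn (by norm_num)).differentiableAt (isOpen_Ioo.mem_nhds hx)
  have hgo : ContDiffOn ℝ 1 (deriv f) (Ioo a b) :=
    hfo.deriv_of_isOpen isOpen_Ioo (by norm_num)
  have hdf' : ∀ x ∈ Ioo a b, DifferentiableAt ℝ (deriv f) x := fun x hx =>
    (hgo.differentiableOn one_ne_zero).differentiableAt (isOpen_Ioo.mem_nhds hx)
  set g := deriv f with hg
  -- v and w have zero derivative on Ioo a b
  set v : ℝ → ℝ := fun x => Real.exp (-(s*x)) * (g x + s * f x) with hv
  set w : ℝ → ℝ := fun x => Real.exp (s*x) * (g x - s * f x) with hw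
  have hvd : ∀ x ∈ Ioo a b, HasDerivAt v 0 x := by
    intro x hx
    have h1 : HasDerivAt (fun t => Real.exp (-(s*t))) (Real.exp (-(s*x)) * (-s)) x := by
      have : HasDerivAt (fun t : ℝ => -(s*t)) (-s) x := by
        simpa [Pi.neg_def] using ((hasDerivAt_id x).const_mul s).neg
      exact this.exp
    have h2 : HasDerivAt (fun t => g t + s * f t) (deriv g x + s * g x) x := by
      exact ((hdf' x hx).hasDerivAt).add (((hdf x hx).hasDerivAt).const_mul s)
    have := h1.mul h2
    refine this.congr_deriv ?_
    rw [hg, hode x hx]; ring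
  have hwd : ∀ x ∈ Ioo a b, HasDerivAt w 0 x := by
    intro x hx
    have h1 : HasDerivAt (fun t => Real.exp (s*t)) (Real.exp (s*x) * s) x := by
      have : HasDerivAt (fun t : ℝ => s*t) s x := by
        simpa using (hasDerivAt_id x).const_mul s
      exact this.exp
    have h2 : HasDerivAt (fun t => g t - s * f t) (deriv g x - s * g x) x := by
      exact ((hdf' x hx).hasDerivAt).sub (((hdf x hx).hasDerivAt).const_mul s)
    have := h1.mul h2
    refine this.congr_deriv ?_
    rw [hg, hode x hx]; ring
  set m : ℝ := (a+b)/2 with hm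
  have hmI : m ∈ Ioo a b := ⟨by rw [hm]; linarith, by rw [hm]; linarith⟩
  set V : ℝ := v m with hV
  set W : ℝ := w m with hW
  set F : ℝ → ℝ := fun x => (Real.exp (s*x) * V - Real.exp (-(s*x)) * W) / (2*s) with hF
  have hFrep : ∀ x ∈ Ioo a b, f x = F x := by
    intro x hx
    have hvx : v x = V := const_of_hasDerivAt_zero hvd x hx m hmI
    have hwx : w x = W := const_of_hasDerivAt_zero hwd x hx m hmI
    have e1 : g x + s * f x = Real.exp (s*x) * V := by
      rw [← hvx, hv]; simp only [Real.exp_neg]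
      field_simp
    have e2 : g x - s * f x = Real.exp (-(s*x)) * W := by
      rw [← hwx, hw]; simp only [Real.exp_neg]
      field_simp
    simp only [hF]
    have : 2 * s * f x = Real.exp (s*x) * V - Real.exp (-(s*x)) * W := by
      rw [← e1, ← e2]; ring
    rw [← this]
    field_simp
  -- extend to endpoints by continuity
  have hne : ∀ c ∈ Icc a b, (𝓝[Ioo a b] c).NeBot := by
    intro c hc
    rw [← mem_closure_iff_nhdsWithin_neBot, closure_Ioo hab.ne]
    exact hc
  have hend : ∀ c ∈ Icc a b, f c = F c := by
    intro c hc
    haveI := hne c hc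
    have t1 : Filter.Tendsto f (𝓝[Ioo a b] c) (𝓝 (f c)) :=
      ((hf.continuousOn c hc).mono Ioo_subset_Icc_self)
    have t2 : Filter.Tendsto f (𝓝[Ioo a b] c) (𝓝 (F c)) := by
      have hFc : ContinuousAt F c := by
        apply ContinuousAt.div_const
        exact ((Real.continuous_exp.comp (continuous_const.mul continuous_id)).mul
          continuous_const).sub
          ((Real.continuous_exp.comp (continuous_const.mul continuous_id).neg).mul
          continuous_const) |>.continuousAt
      have : Filter.Tendsto F (𝓝[Ioo a b] c) (𝓝 (F c)) := hFc.continuousWithinAt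
      refine this.congr' ?_
      filter_upwards [self_mem_nhdsWithin] with x hx using (hFrep x hx).symm
    exact tendsto_nhds_unique t1 t2
  -- now the algebraic identity
  intro x hx
  have hsd : Real.sinh (s*(b-a)) ≠ 0 :=
    ne_of_gt (Real.sinh_pos_iff.mpr (by nlinarith [hab]))
  rw [hend x hx, hend a ⟨le_rfl, hab.le⟩, hend b ⟨hab.le, le_rfl⟩, hF, eq_div_iff hsd]
  rw [show s*(b-x) = s*b - s*x from by ring, show s*(x-a) = s*x - s*a from by ring,
    show s*(b-a) = s*b - s*a from by ring]
  simp only [Real.sinh_eq, Real.exp_sub, Real.exp_neg]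
  field_simp
  ring

set_option maxHeartbeats 1000000

/-- For the solution `u` of the elliptic interface problem `u'' = μu` on
`(0,z) ∪ (z,1)`, `u(0) = u(1) = 0`, jump `u'(z⁺) - u'(z⁻) = -λ` with `λ > 0`:
`u` is strictly positive on `(0,1)` and
`∫₀¹ u = (λ/μ)(1 - (sinh(√μ z) + sinh(√μ(1-z)))/sinh(√μ))`. -/
theorem stmt10 (μ lam z : ℝ) (hμ : 0 < μ) (hlam : 0 < lam)
    (hz : z ∈ Set.Ioo (0:ℝ) 1)
    (u : ℝ → ℝ)
    (hc : ContinuousOn u (Set.Icc 0 1))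
    (hC2l : ContDiffOn ℝ 2 u (Set.Icc 0 z))
    (hC2r : ContDiffOn ℝ 2 u (Set.Icc z 1))
    (hode1 : ∀ x ∈ Set.Ioo 0 z, deriv (deriv u) x - μ * u x = 0)
    (hode2 : ∀ x ∈ Set.Ioo z 1, deriv (deriv u) x - μ * u x = 0)
    (hb0 : u 0 = 0) (hb1 : u 1 = 0)
    (hjump : derivWithin u (Set.Ici z) z - derivWithin u (Set.Iic z) z = -lam) :
    (∀ x ∈ Set.Ioo (0:ℝ) 1, 0 < u x) ∧
    ∫ x in (0:ℝ)..1, u x =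
      (lam / μ) * (1 - (Real.sinh (Real.sqrt μ * z) + Real.sinh (Real.sqrt μ * (1 - z))) /
        Real.sinh (Real.sqrt μ)) := by
  obtain ⟨hz0, hz1⟩ := hz
  set s := Real.sqrt μ with hsdef
  have hs : 0 < s := Real.sqrt_pos.mpr hμ
  have hs2 : s^2 = μ := Real.sq_sqrt hμ.le
  set c := u z with hcz
  set A := Real.sinh (s*z) with hA
  set B := Real.sinh (s*(1-z)) with hB
  set CA := Real.cosh (s*z) with hCAd
  set CB := Real.cosh (s*(1-z)) with hCBd
  have hA0 : 0 < A := Real.sinh_pos_iff.mpr (by positivity)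
  have hB0 : 0 < B := Real.sinh_pos_iff.mpr (by nlinarith)
  have hCA0 : 0 < CA := Real.cosh_pos _
  have hCB0 : 0 < CB := Real.cosh_pos _
  have hSs : 0 < Real.sinh s := Real.sinh_pos_iff.mpr hs
  have hS : Real.sinh s = A * CB + CA * B := by
    rw [hA, hB, hCAd, hCBd, ← Real.sinh_add, show s*z + s*(1-z) = s from by ring]
  -- representation on [0, z]
  have hl : ∀ x ∈ Icc 0 z, u x = c * Real.sinh (s*x) / A := by
    have hrep := ode_rep hs hz0 hC2l (fun x hx => by have := hode1 x hx; rw [hs2]; linarith)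
    intro x hx
    have h := hrep x hx
    rw [hb0] at h
    rw [h, show s*(x-0) = s*x from by ring, show s*(z-0) = s*z from by ring, ← hA]
    ring
  -- representation on [z, 1]
  have hr : ∀ x ∈ Icc z 1, u x = c * Real.sinh (s*(1-x)) / B := by
    have hrep := ode_rep hs hz1 hC2r (fun x hx => by have := hode2 x hx; rw [hs2]; linarith)
    intro x hx
    have h := hrep x hx
    rw [hb1] at h
    rw [h, ← hB]
    ring
  -- one-sided derivatives at z
  have hdl : derivWithin u (Iic z) z = c * (CA * s) / A := by
    have hev : u =ᶠ[𝓝[Iic z] z] (fun x => c * Real.sinh (s*x)/A) := by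
      filter_upwards [mem_nhdsWithin_of_mem_nhds (Ioi_mem_nhds hz0), self_mem_nhdsWithin]
        with x hx1 hx2
      exact hl x ⟨le_of_lt hx1, hx2⟩
    rw [hev.derivWithin_eq (hl z ⟨hz0.le, le_rfl⟩)]
    have h1 : HasDerivAt (fun x : ℝ => s*x) s z := by simpa using (hasDerivAt_id z).const_mul s
    have hd : HasDerivAt (fun x => c * Real.sinh (s*x)/A) (c * (CA * s)/A) z :=
      (h1.sinh.const_mul c).div_const A
    exact hd.hasDerivWithinAt.derivWithin (uniqueDiffOn_Iic z z Set.self_mem_Iic)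
  have hdr : derivWithin u (Ici z) z = c * (CB * (-s)) / B := by
    have hev : u =ᶠ[𝓝[Ici z] z] (fun x => c * Real.sinh (s*(1-x))/B) := by
      filter_upwards [mem_nhdsWithin_of_mem_nhds (Iio_mem_nhds hz1), self_mem_nhdsWithin]
        with x hx1 hx2
      exact hr x ⟨hx2, le_of_lt hx1⟩
    rw [hev.derivWithin_eq (hr z ⟨le_rfl, hz1.le⟩)]
    have h1 : HasDerivAt (fun x : ℝ => s*(1-x)) (-s) z := by
      have h0 : HasDerivAt (fun x : ℝ => s - s*x) (-s) z := by
        simpa using ((hasDerivAt_id z).const_mul s).const_sub s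
      exact h0.congr_of_eventuallyEq (Filter.Eventually.of_forall fun x => by ring)
    have hd : HasDerivAt (fun x => c * Real.sinh (s*(1-x))/B) (c * (CB * (-s))/B) z :=
      (h1.sinh.const_mul c).div_const B
    exact hd.hasDerivWithinAt.derivWithin (uniqueDiffOn_Ici z z Set.self_mem_Ici)
  rw [hdl, hdr] at hjump
  have hcval : c = lam * A * B / (s * Real.sinh s) := by
    rw [eq_div_iff (by positivity), hS]
    field_simp at hjump
    linear_combination -hjump
  have hc0 : 0 < c := by rw [hcval]; positivity
  constructor
  · intro x hx
    rcases le_total x z with h | h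
    · rw [hl x ⟨hx.1.le, h⟩]
      exact div_pos (mul_pos hc0 (Real.sinh_pos_iff.mpr (mul_pos hs hx.1))) hA0
    · rw [hr x ⟨h, hx.2.le⟩]
      have h1x : 0 < s * (1-x) := by nlinarith [hx.2]
      exact div_pos (mul_pos hc0 (Real.sinh_pos_iff.mpr h1x)) hB0
  · have hiL : IntervalIntegrable u MeasureTheory.volume 0 z :=
      (hc.mono (Icc_subset_Icc le_rfl hz1.le)).intervalIntegrable_of_Icc hz0.le
    have hiR : IntervalIntegrable u MeasureTheory.volume z 1 :=
      (hc.mono (Icc_subset_Icc hz0.le le_rfl)).intervalIntegrable_of_Icc hz1.le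
    have hsplit := intervalIntegral.integral_add_adjacent_intervals hiL hiR
    have IL : ∫ x in (0:ℝ)..z, u x = c * (CA - 1)/(s*A) := by
      rw [intervalIntegral.integral_congr (g := fun x => c * Real.sinh (s*x)/A)
        (fun x hx => hl x (by rwa [uIcc_of_le hz0.le] at hx))]
      rw [intervalIntegral.integral_eq_sub_of_hasDerivAt
        (f := fun t => c * Real.cosh (s*t)/(s*A)) (fun x _ => by
          have h1 : HasDerivAt (fun t : ℝ => s*t) s x := by
            simpa using (hasDerivAt_id x).const_mul s
          have hd := (h1.cosh.const_mul c).div_const (s*A)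
          have he : c*(Real.sinh (s*x)*s)/(s*A) = c * Real.sinh (s*x)/A := by
            field_simp
          exact he ▸ hd)
        (Continuous.intervalIntegrable (by fun_prop) _ _)]
      rw [mul_zero, Real.cosh_zero, ← hCAd]
      field_simp
    have IR : ∫ x in z..(1:ℝ), u x = c * (CB - 1)/(s*B) := by
      rw [intervalIntegral.integral_congr (g := fun x => c * Real.sinh (s*(1-x))/B)
        (fun x hx => hr x (by rwa [uIcc_of_le hz1.le] at hx))]
      rw [intervalIntegral.integral_eq_sub_of_hasDerivAt
        (f := fun t => -(c * Real.cosh (s*(1-t))/(s*B))) (fun x _ => by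
          have h1 : HasDerivAt (fun t : ℝ => s*(1-t)) (-s) x := by
            have h0 : HasDerivAt (fun t : ℝ => s - s*t) (-s) x := by
              simpa using ((hasDerivAt_id x).const_mul s).const_sub s
            exact h0.congr_of_eventuallyEq (Filter.Eventually.of_forall fun t => by ring)
          have hd := ((h1.cosh.const_mul c).div_const (s*B)).neg
          have he : -(c*(Real.sinh (s*(1-x))*(-s))/(s*B)) = c * Real.sinh (s*(1-x))/B := by
            field_simp
          exact he ▸ hd)
        (Continuous.intervalIntegrable (by fun_prop) _ _)]
      rw [sub_self, mul_zero, Real.cosh_zero, ← hCBd]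
      field_simp
      ring
    rw [← hsplit, IL, IR, hcval, show μ = s^2 from hs2.symm, hS]
    field_simp
    ring
end

section
/- Let U: ℝ × ℝ → ℝ be differentiable and define u(x) = U(x, |x − z|) for a fixed z ∈ ℝ. Then u is continuous at z, and if ∂_φ U(z, 0) = 0 then u is differentiable at z with u'(z) = ∂_x U(z, 0). More generally, the one-sided derivatives satisfy u'(z⁺) − u'(z⁻) = 2 ∂_φ U(z, 0). -/
open Real Set

/-- Cusp-capturing ansatz: for differentiable `U : ℝ × ℝ → ℝ` and `u(x) = U(x,|x-z|)`,
`u` is continuous at `z`; if `∂_φ U(z,0) = 0` then `u` is differentiable at `z` with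
`u'(z) = ∂_x U(z,0)`; and in general the one-sided derivatives satisfy
`u'(z⁺) - u'(z⁻) = 2 ∂_φ U(z,0)`. -/
theorem stmt11 (U : ℝ → ℝ → ℝ) (z : ℝ)
    (hU : Differentiable ℝ (fun p : ℝ × ℝ => U p.1 p.2))
    (u : ℝ → ℝ) (hu : ∀ x : ℝ, u x = U x |x - z|) :
    ContinuousAt u z ∧
    (deriv (fun φ => U z φ) 0 = 0 →
      HasDerivAt u (deriv (fun x => U x 0) z) z) ∧
    derivWithin u (Set.Ici z) z - derivWithin u (Set.Iic z) z =
      2 * deriv (fun φ => U z φ) 0 := by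
  set F : ℝ × ℝ → ℝ := fun p => U p.1 p.2 with hFdef
  set L := fderiv ℝ F (z, 0) with hL
  have hFd : HasFDerivAt F L (z, 0) := (hU (z, 0)).hasFDerivAt
  -- derivative of φ ↦ U z φ at 0
  have hcb : HasDerivAt (fun φ : ℝ => ((z, φ) : ℝ × ℝ)) ((0 : ℝ), (1 : ℝ)) 0 :=
    HasDerivAt.prodMk (hasDerivAt_const (0:ℝ) z) (hasDerivAt_id 0)
  have hb' : HasDerivAt (fun φ => U z φ) (L (0, 1)) 0 := by
    have := hFd.comp_hasDerivAt 0 hcb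
    exact this
  have hb : deriv (fun φ => U z φ) 0 = L (0, 1) := hb'.deriv
  -- derivative of x ↦ U x 0 at z
  have hca : HasDerivAt (fun x : ℝ => ((x, (0:ℝ)) : ℝ × ℝ)) ((1 : ℝ), (0 : ℝ)) z :=
    HasDerivAt.prodMk (hasDerivAt_id z) (hasDerivAt_const z 0)
  have ha' : HasDerivAt (fun x => U x 0) (L (1, 0)) z := by
    have := hFd.comp_hasDerivAt z hca
    exact this
  have ha : deriv (fun x => U x 0) z = L (1, 0) := ha'.deriv
  -- right branch
  have hcp : HasDerivAt (fun x : ℝ => ((x, x - z) : ℝ × ℝ)) ((1 : ℝ), (1 : ℝ)) z :=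
    HasDerivAt.prodMk (hasDerivAt_id z) ((hasDerivAt_id z).sub_const z)
  have hgp : HasDerivAt (fun x => U x (x - z)) (L (1, 1)) z := by
    have : HasFDerivAt F L (z, z - z) := by rwa [sub_self]
    exact this.comp_hasDerivAt z hcp
  have hcm : HasDerivAt (fun x : ℝ => ((x, z - x) : ℝ × ℝ)) ((1 : ℝ), (-1 : ℝ)) z :=
    HasDerivAt.prodMk (hasDerivAt_id z) ((hasDerivAt_id' z).const_sub z)
  have hgm : HasDerivAt (fun x => U x (z - x)) (L (1, -1)) z := by
    have : HasFDerivAt F L (z, z - z) := by rwa [sub_self]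
    exact this.comp_hasDerivAt z hcm
  -- u agrees with branches on half lines
  have hup : HasDerivWithinAt u (L (1, 1)) (Set.Ici z) z := by
    refine (hgp.hasDerivWithinAt).congr (fun x hx => ?_) ?_
    · rw [hu x, abs_of_nonneg (sub_nonneg.2 hx)]
    · rw [hu z, sub_self, abs_zero]
  have hum : HasDerivWithinAt u (L (1, -1)) (Set.Iic z) z := by
    refine (hgm.hasDerivWithinAt).congr (fun x hx => ?_) ?_
    · rw [hu x, abs_of_nonpos (sub_nonpos.2 hx), neg_sub]
    · rw [hu z, sub_self, abs_zero]
  have h11 : ((1 : ℝ), (1 : ℝ)) = ((1 : ℝ), (0 : ℝ)) + ((0 : ℝ), (1 : ℝ)) := by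
    simp [Prod.ext_iff]
  have h1m : ((1 : ℝ), (-1 : ℝ)) = ((1 : ℝ), (0 : ℝ)) - ((0 : ℝ), (1 : ℝ)) := by
    simp [Prod.ext_iff]
  refine ⟨?_, ?_, ?_⟩
  · have heq : u = fun x => F (x, |x - z|) := funext fun x => hu x
    rw [heq]
    exact (hU.continuous.comp (continuous_id.prodMk
      ((continuous_id.sub continuous_const).abs))).continuousAt
  · intro hb0
    have hb0' : L (0, 1) = 0 := by rw [← hb]; exact hb0
    have h1 : HasDerivWithinAt u (deriv (fun x => U x 0) z) (Set.Ici z) z := by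
      rw [ha]
      have : L (1, 1) = L (1, 0) := by rw [h11, map_add, hb0', add_zero]
      rwa [this] at hup
    have h2 : HasDerivWithinAt u (deriv (fun x => U x 0) z) (Set.Iic z) z := by
      rw [ha]
      have : L (1, -1) = L (1, 0) := by rw [h1m, map_sub, hb0', sub_zero]
      rwa [this] at hum
    have := h2.union h1
    rw [Set.Iic_union_Ici] at this
    exact (hasDerivWithinAt_univ.1 this)
  · have d1 : derivWithin u (Set.Ici z) z = L (1, 1) :=
      hup.derivWithin (uniqueDiffOn_Ici z z Set.self_mem_Ici)
    have d2 : derivWithin u (Set.Iic z) z = L (1, -1) :=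
      hum.derivWithin (uniqueDiffOn_Iic z z Set.self_mem_Iic)
    rw [d1, d2, hb, h11, h1m, map_add, map_sub]
    ring
end
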